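/- arXiv:0802.2125 — 2 statements merged into one kernel-verified Lean document; each statement's English description precedes it below -/
import Mathlib

section
/- Let H : Fin 3 → Fin 3 → Matrix (Fin 2) (Fin 2) ℝ be defined by H i j = identity matrix for i ≠ j, H 1 1 = H 2 2 = diagonal(1, −1), and H 3 3 = diagonal(−1, 1); let v = (1,1) and u = (1,−1) in ℝ². Then for every choice of transmitted scalars x : Fin 3 → ℝ and every receiver i, u · (Σ_{j=1}^{3} (H i j)·(x j • v)) = c_i · x i, where c₁ = c₂ = 2 and c₃ = −2; in particular each receiver recovers its own symbol free of interference from the other two transmitters. -/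
open Matrix

/-- The two-carrier channel matrices of the counterexample:
`H i j = I` for `i ≠ j`, `H 1 1 = H 2 2 = diag(1,-1)`, `H 3 3 = diag(-1,1)`
(users `1,2,3` are indexed by `0,1,2 : Fin 3`). -/
def chan : Fin 3 → Fin 3 → Matrix (Fin 2) (Fin 2) ℝ :=
  ![![Matrix.diagonal ![1, -1], 1, 1],
    ![1, Matrix.diagonal ![1, -1], 1],
    ![1, 1, Matrix.diagonal ![-1, 1]]]

/-- Noiseless core of the achievability of 3/2 degrees of freedom: each transmitter `j`
beamforms its symbol `x j` along `v = (1,1)`; projecting the received sum onto the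
zero-forcing vector `u = (1,-1)` recovers `c i · x i` free of interference,
with `c = (2, 2, -2)`. -/
theorem zero_forcing_recovers_symbol :
    let v : Fin 2 → ℝ := ![1, 1]
    let u : Fin 2 → ℝ := ![1, -1]
    let c : Fin 3 → ℝ := ![2, 2, -2]
    ∀ (x : Fin 3 → ℝ) (i : Fin 3),
      u ⬝ᵥ (∑ j : Fin 3, (chan i j).mulVec (x j • v)) = c i * x i := by
  intro v u c x i
  fin_cases i <;>
    simp [v, u, c, chan, Fin.sum_univ_three, dotProduct, mulVec, Fin.sum_univ_two,
      Matrix.diagonal, Matrix.one_apply] <;> ring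
end

section
/- Let H : Fin 3 → Fin 3 → Matrix (Fin 2) (Fin 2) ℝ be defined by H i j = identity matrix for i ≠ j, H 1 1 = H 2 2 = diagonal(1, −1), and H 3 3 = diagonal(−1, 1), and let v = (1,1) ∈ ℝ². Then for every i ∈ Fin 3, the pair of vectors {v, (H i i)·v} is linearly independent in ℝ² (equivalently, spans all of ℝ²), while for every j ≠ i the interference vector (H i j)·v lies in the span of v. -/
open Matrix

lemma li_aux (w : Fin 2 → ℝ) (hw : w 0 * 1 - w 1 * 1 ≠ 0) :
    LinearIndependent ℝ ![(![1,1] : Fin 2 → ℝ), w] := by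
  rw [LinearIndependent.pair_iff]
  intro s t h
  have h0 := congrFun h 0
  have h1 := congrFun h 1
  simp at h0 h1
  have ht : t * (w 0 - w 1) = 0 := by ring_nf; linarith
  have ht0 : t = 0 := by
    rcases mul_eq_zero.mp ht with h | h
    · exact h
    · exact absurd (by linarith) hw
  constructor <;> [skip; exact ht0]
  rw [ht0] at h0; linarith

lemma sp_aux (w : Fin 2 → ℝ) (h0 : w 0 = 1) (h1 : w 1 = -1) :
    Submodule.span ℝ {(![1,1] : Fin 2 → ℝ), w} = ⊤ := by
  rw [eq_top_iff]
  intro x _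
  rw [Submodule.mem_span_pair]
  exact ⟨(x 0 + x 1)/2, (x 0 - x 1)/2, by funext k; fin_cases k <;> simp [h0, h1] <;> ring⟩

lemma sp_aux' (w : Fin 2 → ℝ) (h0 : w 0 = -1) (h1 : w 1 = 1) :
    Submodule.span ℝ {(![1,1] : Fin 2 → ℝ), w} = ⊤ := by
  rw [eq_top_iff]
  intro x _
  rw [Submodule.mem_span_pair]
  exact ⟨(x 0 + x 1)/2, (x 1 - x 0)/2, by funext k; fin_cases k <;> simp [h0, h1] <;> ring⟩

/-- Dimension counting form of interference alignment: at each receiver `i`, the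
desired direction `(H i i)·v` together with the beamforming vector `v = (1,1)` is
linearly independent (equivalently spans ℝ²), while every interference vector
`(H i j)·v`, `j ≠ i`, lies in the one-dimensional subspace `span {v}`. -/
theorem alignment_dimension_count :
    let v : Fin 2 → ℝ := ![1, 1]
    ∀ i : Fin 3,
      LinearIndependent ℝ ![v, (chan i i).mulVec v] ∧
      Submodule.span ℝ {v, (chan i i).mulVec v} = (⊤ : Submodule ℝ (Fin 2 → ℝ)) ∧
      ∀ j : Fin 3, j ≠ i → (chan i j).mulVec v ∈ Submodule.span ℝ {v} := by
  intro v i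
  have hinterf : ∀ j : Fin 3, j ≠ i → (chan i j).mulVec v ∈ Submodule.span ℝ {v} := by
    intro j hj
    have : (chan i j).mulVec v = v := by
      fin_cases i <;> fin_cases j <;> simp_all <;>
        simp [chan, Matrix.vecHead, Matrix.vecTail, Matrix.one_mulVec] <;>
        (funext k; fin_cases k <;> rfl)
    rw [this]
    exact Submodule.mem_span_singleton_self v
  refine ⟨?_, ?_, hinterf⟩ <;> fin_cases i
  · exact li_aux _ (by norm_num [chan, v, mulVec, dotProduct, Fin.sum_univ_two, Matrix.diagonal, Matrix.vecHead, Matrix.vecTail])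
  · exact li_aux _ (by norm_num [chan, v, mulVec, dotProduct, Fin.sum_univ_two, Matrix.diagonal, Matrix.vecHead, Matrix.vecTail])
  · exact li_aux _ (by norm_num [chan, v, mulVec, dotProduct, Fin.sum_univ_two, Matrix.diagonal, Matrix.vecHead, Matrix.vecTail])
  · exact sp_aux _ (by simp [chan, v, mulVec, dotProduct, Fin.sum_univ_two, Matrix.diagonal])
      (by simp [chan, v, mulVec, dotProduct, Fin.sum_univ_two, Matrix.diagonal])
  · exact sp_aux _ (by simp [chan, v, mulVec, dotProduct, Fin.sum_univ_two, Matrix.diagonal])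
      (by simp [chan, v, mulVec, dotProduct, Fin.sum_univ_two, Matrix.diagonal])
  · exact sp_aux' _ (by simp [chan, v, mulVec, dotProduct, Fin.sum_univ_two, Matrix.diagonal, Matrix.vecHead, Matrix.vecTail])
      (by simp [chan, v, mulVec, dotProduct, Fin.sum_univ_two, Matrix.diagonal, Matrix.vecHead, Matrix.vecTail])
end
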